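/- Let E be a positive linear map on the positive orthant of ℝⁿ represented by a matrix with entries q(i,j) satisfying 0 < α ≤ q(i,j) ≤ β < ∞ for all i, j. Then for all strictly positive vectors x, the ratio max_i (Ex)_i / min_i (Ex)_i is at most β/α; consequently the projective diameter of E is at most 2 log(β/α) and E is a strict contraction in the Hilbert metric. -/

import Mathlib

open Real Matrix

/-- The Hilbert projective metric on the positive orthant of `ℝⁿ`. -/
noncomputable def dHpos {n : ℕ} (x y : Fin n → ℝ) : ℝ :=
  Real.log ((⨆ i, x i / y i) / (⨅ i, x i / y i))


lemma tanh_lt_one' (x : ℝ) : Real.tanh x < 1 := by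
  rw [Real.tanh_eq_sinh_div_cosh, div_lt_one (Real.cosh_pos x)]
  nlinarith [Real.cosh_sub_sinh x, Real.exp_pos (-x)]

lemma tanh_half_log {g : ℝ} (hg : 0 < g) : Real.tanh (Real.log g / 2) = (g - 1) / (g + 1) := by
  have hs : 0 < Real.sqrt g := Real.sqrt_pos.2 hg
  rw [← Real.log_sqrt hg.le, Real.tanh_eq_sinh_div_cosh, Real.sinh_log hs, Real.cosh_log hs]
  have h2 : Real.sqrt g * Real.sqrt g = g := Real.mul_self_sqrt hg.le
  field_simp
  rw [Real.sq_sqrt hg.le]; ring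


lemma ptwise {α β a b c d s : ℝ} (hα : 0 < α) (hαβ : α ≤ β)
    (ha : 0 < a) (hb : 0 < b) (hc : 0 < c) (hd : 0 < d) (hs : 0 < s)
    (h : α^2 * (a*d) ≤ β^2 * (b*c)) :
    (β + α) * (s*(a*d) - s*(b*c)) ≤ (β - α) * ((a*s+b)*(c*s+d)) := by
  rcases le_or_gt (2*α*d) ((β-α)*(c*s)) with hcase | hcase
  · nlinarith [mul_nonneg (mul_pos ha hs).le (by linarith : (0:ℝ) ≤ (β-α)*(c*s) - 2*(α*d)),
      mul_pos hb (mul_pos hc hs), mul_pos hb hd, mul_pos hα hα]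
  · nlinarith [mul_nonneg (by nlinarith : (0:ℝ) ≤ β^2*(b*(c*s)) - α^2*(a*(d*s)))
        (by linarith : (0:ℝ) ≤ 2*α*d - (β-α)*(c*s)),
      mul_nonneg (mul_nonneg (by linarith : (0:ℝ) ≤ β - α) hb.le) (sq_nonneg (β*(c*s) - α*d)),
      mul_pos (mul_pos hα hα) hd]

lemma fourvar {α β : ℝ} (hα : 0 < α) (hαβ : α ≤ β) {a b c d t : ℝ}
    (ha : 0 ≤ a) (hb : 0 ≤ b) (hc : 0 ≤ c) (hd : 0 ≤ d)
    (h1 : α * c ≤ β * a) (h2 : α * a ≤ β * c)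
    (h3 : α * d ≤ β * b) (h4 : α * b ≤ β * d)
    (hab : 0 < a + b) (hcd : 0 < c + d) (ht : 1 ≤ t) :
    (a*t + b) * (c + d) ≤ t ^ ((β - α)/(β + α)) * ((c*t + d) * (a + b)) := by
  have ht0 : (0:ℝ) < t := lt_of_lt_of_le one_pos ht
  have hκ0 : 0 ≤ (β - α)/(β + α) := div_nonneg (by linarith) (by linarith)
  have hT1 : (1:ℝ) ≤ t ^ ((β - α)/(β + α)) := by
    calc (1:ℝ) = t ^ (0:ℝ) := (Real.rpow_zero t).symm
    _ ≤ _ := Real.rpow_le_rpow_of_exponent_le ht hκ0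
  rcases ha.eq_or_lt with rfl | ha
  · have hc0 : c = 0 := le_antisymm (by nlinarith) hc
    subst hc0
    have hb0 : 0 < b := by linarith
    have hd0 : 0 < d := by linarith
    simp only [zero_mul, zero_add]
    nlinarith [mul_pos hb0 hd0]
  rcases hc.eq_or_lt with rfl | hc
  · exfalso; nlinarith
  rcases hb.eq_or_lt with rfl | hb
  · have hd0 : d = 0 := le_antisymm (by nlinarith) hd
    subst hd0
    simp only [add_zero, mul_zero]
    nlinarith [mul_pos (mul_pos ha ht0) hc]
  rcases hd.eq_or_lt with rfl | hd
  · exfalso; nlinarith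
  -- main case: all positive
  set κ := (β - α)/(β + α) with hκ
  set f : ℝ → ℝ := fun s => κ * Real.log s + Real.log (c*s + d) - Real.log (a*s + b) with hf
  have hP : ∀ s : ℝ, 1 ≤ s → 0 < a*s + b := fun s hs => by nlinarith
  have hQ : ∀ s : ℝ, 1 ≤ s → 0 < c*s + d := fun s hs => by nlinarith
  have hder : ∀ s : ℝ, 1 ≤ s →
      HasDerivAt f (κ * s⁻¹ + c/(c*s+d) - a/(a*s+b)) s := by
    intro s hs
    have hs0 : (0:ℝ) < s := lt_of_lt_of_le one_pos hs
    have d1 : HasDerivAt (fun s : ℝ => κ * Real.log s) (κ * s⁻¹) s :=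
      (Real.hasDerivAt_log hs0.ne').const_mul κ
    have d2 : HasDerivAt (fun s : ℝ => Real.log (c*s + d)) (c/(c*s+d)) s := by
      have : HasDerivAt (fun s : ℝ => c*s + d) c s := by
        simpa using ((hasDerivAt_id s).const_mul c).add_const d
      simpa using this.log (hQ s hs).ne'
    have d3 : HasDerivAt (fun s : ℝ => Real.log (a*s + b)) (a/(a*s+b)) s := by
      have : HasDerivAt (fun s : ℝ => a*s + b) a s := by
        simpa using ((hasDerivAt_id s).const_mul a).add_const b
      simpa using this.log (hP s hs).ne'
    exact (d1.add d2).sub d3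
  have hmono : MonotoneOn f (Set.Ici 1) := by
    apply monotoneOn_of_deriv_nonneg (convex_Ici 1)
    · intro s hs
      exact (hder s hs).continuousAt.continuousWithinAt
    · intro s hs
      rw [interior_Ici] at hs
      exact (hder s (le_of_lt hs)).differentiableAt.differentiableWithinAt
    · intro s hs
      rw [interior_Ici] at hs
      have hs1 : 1 ≤ s := le_of_lt hs
      have hs0 : (0:ℝ) < s := lt_of_lt_of_le one_pos hs1
      rw [(hder s hs1).deriv]
      -- need: 0 ≤ κ * s⁻¹ + c/(c*s+d) - a/(a*s+b)
      have hpt := ptwise hα hαβ ha hb hc hd hs0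
        (by nlinarith [mul_le_mul h2 h3 (by positivity) (mul_nonneg (by linarith) hc.le)] : α^2 * (a*d) ≤ β^2 * (b*c))
      have hPp := hP s hs1
      have hQp := hQ s hs1
      have hβα : (0:ℝ) < β + α := by linarith
      have key : a/(a*s+b) - c/(c*s+d) ≤ κ * s⁻¹ := by
        have e : a/(a*s+b) - c/(c*s+d) = (s*(a*d) - s*(b*c)) / (s*((a*s+b)*(c*s+d))) := by
          field_simp; ring
        have e2 : κ * s⁻¹ = (β-α) / ((β+α)*s) := by rw [hκ]; field_simp
        rw [e, e2, div_le_div_iff₀ (by positivity) (by positivity)]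
        calc (s*(a*d) - s*(b*c)) * ((β+α)*s)
            = s*((β + α) * (s*(a*d) - s*(b*c))) := by ring
        _ ≤ s*((β - α) * ((a*s+b)*(c*s+d))) := mul_le_mul_of_nonneg_left hpt hs0.le
        _ = (β-α) * (s*((a*s+b)*(c*s+d))) := by ring
      linarith
  have h1t : f 1 ≤ f t := hmono (by simp) (by simpa using ht) ht
  have e1 : f 1 = Real.log (c + d) - Real.log (a + b) := by
    simp [hf]
  have hPt := hP t ht
  have hQt := hQ t ht
  have e2 : f t = κ * Real.log t + Real.log (c*t + d) - Real.log (a*t + b) := rfl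
  have goal_log : Real.log ((a*t + b) * (c + d)) ≤ Real.log (t ^ κ * ((c*t + d) * (a + b))) := by
    rw [Real.log_mul hPt.ne' hcd.ne', Real.log_mul (by positivity) (by positivity),
      Real.log_mul hQt.ne' hab.ne', Real.log_rpow ht0]
    rw [e1, e2] at h1t
    linarith
  have hL : (0:ℝ) < (a*t + b) * (c + d) := by positivity
  have hR : (0:ℝ) < t ^ κ * ((c*t + d) * (a + b)) := by positivity
  calc (a*t + b) * (c + d) = Real.exp (Real.log ((a*t + b) * (c + d))) := (Real.exp_log hL).symm
  _ ≤ Real.exp (Real.log (t ^ κ * ((c*t + d) * (a + b)))) := Real.exp_le_exp.2 goal_log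
  _ = _ := Real.exp_log hR

section helpers
variable {n : ℕ} [Nonempty (Fin n)]

lemma fin_le_ciSup' (f : Fin n → ℝ) (i : Fin n) : f i ≤ ⨆ j, f j :=
  le_ciSup (Set.Finite.bddAbove (Set.finite_range f)) i

lemma fin_ciInf_le' (f : Fin n → ℝ) (i : Fin n) : ⨅ j, f j ≤ f i :=
  ciInf_le (Set.Finite.bddBelow (Set.finite_range f)) i

lemma fin_ciInf_pos' {f : Fin n → ℝ} (hf : ∀ i, 0 < f i) : 0 < ⨅ i, f i := by
  obtain ⟨i, hi⟩ := Finite.exists_min f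
  exact lt_of_lt_of_le (hf i) (le_ciInf hi)

end helpers

lemma key_pair {n : ℕ} (hn : 0 < n) (Q : Matrix (Fin n) (Fin n) ℝ)
    {α β : ℝ} (hα : 0 < α) (hαβ : α ≤ β)
    (hQ : ∀ i j, α ≤ Q i j ∧ Q i j ≤ β)
    {x y : Fin n → ℝ} (hx : ∀ i, 0 < x i) (hy : ∀ i, 0 < y i) (i k : Fin n) :
    Q.mulVec x i * Q.mulVec y k ≤
      ((⨆ j, x j / y j) / (⨅ j, x j / y j)) ^ ((β - α)/(β + α)) *
        (Q.mulVec x k * Q.mulVec y i) := by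
  haveI : Nonempty (Fin n) := Fin.pos_iff_nonempty.mp hn
  set m := ⨅ j, x j / y j with hm'
  set M := ⨆ j, x j / y j with hM'
  have hcpos : ∀ j, 0 < x j / y j := fun j => div_pos (hx j) (hy j)
  have hm : 0 < m := fin_ciInf_pos' hcpos
  have hmc : ∀ j, m ≤ x j / y j := by
    intro j; rw [hm']; exact fin_ciInf_le' (fun j => x j / y j) j
  have hcM : ∀ j, x j / y j ≤ M := by
    intro j; rw [hM']; exact fin_le_ciSup' (fun j => x j / y j) j
  have hmM : m ≤ M := (hmc (Classical.arbitrary _)).trans (hcM _)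
  have ht1 : (1:ℝ) ≤ M / m := (one_le_div hm).2 hmM
  set κ := (β - α)/(β + α) with hκ
  set T := (M / m) ^ κ with hT
  have hT0 : 0 < T := Real.rpow_pos_of_pos (by positivity) _
  set A : Fin n → ℝ := fun j => Q i j * y j with hA
  set B : Fin n → ℝ := fun j => Q k j * y j with hB
  have hApos : ∀ j, 0 < A j := fun j => mul_pos (lt_of_lt_of_le hα (hQ i j).1) (hy j)
  have hBpos : ∀ j, 0 < B j := fun j => mul_pos (lt_of_lt_of_le hα (hQ k j).1) (hy j)
  set SA := ∑ j, A j with hSA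
  set SB := ∑ j, B j with hSB
  have hSApos : 0 < SA := Finset.sum_pos (fun j _ => hApos j) Finset.univ_nonempty
  have hSBpos : 0 < SB := Finset.sum_pos (fun j _ => hBpos j) Finset.univ_nonempty
  set w : Fin n → ℝ := fun j => A j * SB - T * B j * SA with hw
  have rowsum : ∀ (F : Finset (Fin n)) (i' k' : Fin n),
      α * ∑ j ∈ F, Q k' j * y j ≤ β * ∑ j ∈ F, Q i' j * y j := by
    intro F i' k'
    rw [Finset.mul_sum, Finset.mul_sum]
    refine Finset.sum_le_sum fun j _ => ?_
    have h' : α * Q k' j ≤ β * Q i' j := by nlinarith [(hQ k' j).2, (hQ i' j).1]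
    calc α * (Q k' j * y j) = (α * Q k' j) * y j := by ring
    _ ≤ (β * Q i' j) * y j := mul_le_mul_of_nonneg_right h' (hy j).le
    _ = β * (Q i' j * y j) := by ring
  set S : Finset (Fin n) := Finset.univ.filter (fun j => 0 ≤ w j) with hS
  set Sc : Finset (Fin n) := Finset.univ.filter (fun j => ¬ 0 ≤ w j) with hSc
  set a := ∑ j ∈ S, A j with ha'
  set b := ∑ j ∈ Sc, A j with hb'
  set cc := ∑ j ∈ S, B j with hcc'
  set d := ∑ j ∈ Sc, B j with hd'
  have hab : a + b = SA := by
    rw [ha', hb', hSA, hS, hSc, Finset.sum_filter_add_sum_filter_not]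
  have hcd : cc + d = SB := by
    rw [hcc', hd', hSB, hS, hSc, Finset.sum_filter_add_sum_filter_not]
  have h4 := fourvar hα hαβ (t := M/m)
    (Finset.sum_nonneg fun j _ => (hApos j).le) (Finset.sum_nonneg fun j _ => (hApos j).le)
    (Finset.sum_nonneg fun j _ => (hBpos j).le) (Finset.sum_nonneg fun j _ => (hBpos j).le)
    (rowsum S i k) (rowsum S k i) (rowsum Sc i k) (rowsum Sc k i)
    (hab ▸ hSApos) (hcd ▸ hSBpos) ht1
  -- multiply h4 by m
  simp only [← ha', ← hb', ← hcc', ← hd', ← hκ, ← hT] at h4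
  have e0 : a*(M/m)*m = M*a := by field_simp
  have e0' : cc*(M/m)*m = M*cc := by field_simp
  have e3 : m * ((a*(M/m) + b) * (cc + d)) = (M*a + m*b) * (cc + d) := by
    rw [← e0]; ring
  have e4 : m * (T * ((cc*(M/m) + d) * (a + b))) = T * ((M*cc + m*d) * (a+b)) := by
    rw [← e0']; ring
  have h5 : (M*a + m*b) * SB ≤ T * ((M*cc + m*d) * SA) := by
    rw [← hab, ← hcd, ← e3, ← e4]
    exact mul_le_mul_of_nonneg_left h4 hm.le
  -- sum manipulation
  have hsum_le : ∑ j, (x j / y j) * w j ≤ (M*a + m*b) * SB - T * ((M*cc + m*d) * SA) := by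
    have step1 : ∑ j, (x j / y j) * w j ≤ ∑ j, (if 0 ≤ w j then M * w j else m * w j) := by
      refine Finset.sum_le_sum fun j _ => ?_
      by_cases hj : 0 ≤ w j
      · rw [if_pos hj]; exact mul_le_mul_of_nonneg_right (hcM j) hj
      · rw [if_neg hj]
        exact mul_le_mul_of_nonpos_right (hmc j) (le_of_not_ge hj)
    have step2 : ∑ j, (if 0 ≤ w j then M * w j else m * w j)
        = M * ∑ j ∈ S, w j + m * ∑ j ∈ Sc, w j := by
      rw [Finset.sum_ite, ← Finset.mul_sum, ← Finset.mul_sum]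
    have step3 : ∑ j ∈ S, w j = a * SB - T * cc * SA := by
      rw [hw, ha', hcc', Finset.sum_sub_distrib, ← Finset.sum_mul, ← Finset.sum_mul,
        ← Finset.mul_sum]
    have step4 : ∑ j ∈ Sc, w j = b * SB - T * d * SA := by
      rw [hw, hb', hd', Finset.sum_sub_distrib, ← Finset.sum_mul, ← Finset.sum_mul,
        ← Finset.mul_sum]
    calc ∑ j, (x j / y j) * w j ≤ _ := step1
    _ = M * (a * SB - T * cc * SA) + m * (b * SB - T * d * SA) := by
        rw [step2, step3, step4]
    _ = (M*a + m*b) * SB - T * ((M*cc + m*d) * SA) := by ring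
  have hsum_eq : ∑ j, (x j / y j) * w j
      = Q.mulVec x i * SB - T * (Q.mulVec x k * SA) := by
    have hxA : ∀ j, (x j / y j) * A j = Q i j * x j := by
      intro j; rw [hA]; field_simp [(hy j).ne']
    have hxB : ∀ j, (x j / y j) * B j = Q k j * x j := by
      intro j; rw [hB]; field_simp [(hy j).ne']
    have hmvx : Q.mulVec x i = ∑ j, Q i j * x j := by
      simp [Matrix.mulVec, dotProduct]
    have hmvxk : Q.mulVec x k = ∑ j, Q k j * x j := by
      simp [Matrix.mulVec, dotProduct]
    calc ∑ j, (x j / y j) * w j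
        = ∑ j, (((x j / y j) * A j) * SB - T * (((x j / y j) * B j) * SA)) := by
          refine Finset.sum_congr rfl fun j _ => ?_; rw [hw]; ring
    _ = ∑ j, ((Q i j * x j) * SB - T * ((Q k j * x j) * SA)) := by
          refine Finset.sum_congr rfl fun j _ => ?_; rw [hxA j, hxB j]
    _ = (∑ j, Q i j * x j) * SB - T * ((∑ j, Q k j * x j) * SA) := by
          rw [Finset.sum_sub_distrib, ← Finset.sum_mul]
          congr 1
          rw [← Finset.mul_sum, ← Finset.sum_mul]
    _ = Q.mulVec x i * SB - T * (Q.mulVec x k * SA) := by rw [hmvx, hmvxk]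
  have hSAeq : SA = Q.mulVec y i := by simp [hSA, hA, Matrix.mulVec, dotProduct]
  have hSBeq : SB = Q.mulVec y k := by simp [hSB, hB, Matrix.mulVec, dotProduct]
  have := hsum_eq ▸ hsum_le
  rw [hSAeq, hSBeq] at this
  have h5' := h5
  rw [hSAeq, hSBeq] at h5'
  linarith


/-- a positive matrix with entries in `[α, β]` (for
`0 < α ≤ β`) maps positive vectors to vectors whose component ratio is at
most `β/α`; hence its projective diameter is at most `2 log(β/α)` and it is a
strict contraction in the Hilbert metric with ratio `tanh((2 log(β/α))/4) < 1`. -/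
theorem positive_matrix_contraction
    {n : ℕ} (hn : 0 < n) (Q : Matrix (Fin n) (Fin n) ℝ)
    (α β : ℝ) (hα : 0 < α) (hαβ : α ≤ β)
    (hQ : ∀ i j, α ≤ Q i j ∧ Q i j ≤ β) :
    (∀ x : Fin n → ℝ, (∀ i, 0 < x i) →
      (⨆ i, Q.mulVec x i) / (⨅ i, Q.mulVec x i) ≤ β / α) ∧
    (∀ x y : Fin n → ℝ, (∀ i, 0 < x i) → (∀ i, 0 < y i) →
      dHpos (Q.mulVec x) (Q.mulVec y) ≤ 2 * Real.log (β / α)) ∧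
    Real.tanh ((2 * Real.log (β / α)) / 4) < 1 ∧
    (∀ x y : Fin n → ℝ, (∀ i, 0 < x i) → (∀ i, 0 < y i) →
      dHpos (Q.mulVec x) (Q.mulVec y)
        ≤ Real.tanh ((2 * Real.log (β / α)) / 4) * dHpos x y) := by
  haveI : Nonempty (Fin n) := Fin.pos_iff_nonempty.mp hn
  have hβ : 0 < β := lt_of_lt_of_le hα hαβ
  have hQpos : ∀ i j, 0 < Q i j := fun i j => lt_of_lt_of_le hα (hQ i j).1
  have hmveq : ∀ (v : Fin n → ℝ) (i : Fin n), Q.mulVec v i = ∑ j, Q i j * v j := by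
    intro v i; simp [Matrix.mulVec, dotProduct]
  have hmv : ∀ (v : Fin n → ℝ), (∀ i, 0 < v i) → ∀ i, 0 < Q.mulVec v i := by
    intro v hv i
    rw [hmveq]
    exact Finset.sum_pos (fun j _ => mul_pos (hQpos i j) (hv j)) Finset.univ_nonempty
  have hmv_up : ∀ (v : Fin n → ℝ), (∀ i, 0 < v i) → ∀ i, Q.mulVec v i ≤ β * ∑ j, v j := by
    intro v hv i
    rw [hmveq, Finset.mul_sum]
    exact Finset.sum_le_sum fun j _ => mul_le_mul_of_nonneg_right (hQ i j).2 (hv j).le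
  have hmv_lo : ∀ (v : Fin n → ℝ), (∀ i, 0 < v i) → ∀ i, α * ∑ j, v j ≤ Q.mulVec v i := by
    intro v hv i
    rw [hmveq, Finset.mul_sum]
    exact Finset.sum_le_sum fun j _ => mul_le_mul_of_nonneg_right (hQ i j).1 (hv j).le
  refine ⟨?_, ?_, tanh_lt_one' _, ?_⟩
  · -- part 1
    intro x hx
    have hsx : 0 < ∑ j, x j := Finset.sum_pos (fun j _ => hx j) Finset.univ_nonempty
    have hub : (⨆ i, Q.mulVec x i) ≤ β * ∑ j, x j := ciSup_le (hmv_up x hx)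
    have hlb : α * ∑ j, x j ≤ ⨅ i, Q.mulVec x i := le_ciInf (hmv_lo x hx)
    calc (⨆ i, Q.mulVec x i) / (⨅ i, Q.mulVec x i)
        ≤ (β * ∑ j, x j) / (α * ∑ j, x j) :=
          div_le_div₀ (by positivity) hub (by positivity) hlb
    _ = β / α := mul_div_mul_right _ _ hsx.ne'
  · -- part 2
    intro x y hx hy
    have hsx : 0 < ∑ j, x j := Finset.sum_pos (fun j _ => hx j) Finset.univ_nonempty
    have hsy : 0 < ∑ j, y j := Finset.sum_pos (fun j _ => hy j) Finset.univ_nonempty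
    set R : Fin n → ℝ := fun i => Q.mulVec x i / Q.mulVec y i with hR
    have hub : (⨆ i, R i) ≤ (β * ∑ j, x j) / (α * ∑ j, y j) :=
      ciSup_le fun i => div_le_div₀ (by positivity) (hmv_up x hx i) (by positivity) (hmv_lo y hy i)
    have hlb : (α * ∑ j, x j) / (β * ∑ j, y j) ≤ ⨅ i, R i :=
      le_ciInf fun i => div_le_div₀ (hmv x hx i).le (hmv_lo x hx i) (hmv y hy i) (hmv_up y hy i)
    have hinfpos : 0 < ⨅ i, R i := lt_of_lt_of_le (by positivity) hlb
    have hiis : (⨅ i, R i) ≤ ⨆ i, R i :=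
      (fin_ciInf_le' R (Classical.arbitrary _)).trans (fin_le_ciSup' R (Classical.arbitrary _))
    have hratio : (⨆ i, R i) / (⨅ i, R i) ≤ (β/α)^2 := by
      calc (⨆ i, R i) / (⨅ i, R i)
          ≤ ((β * ∑ j, x j) / (α * ∑ j, y j)) / ((α * ∑ j, x j) / (β * ∑ j, y j)) :=
            div_le_div₀ (by positivity) hub (by positivity) hlb
      _ = (β/α)^2 := by
            field_simp
    have hpos : 0 < (⨆ i, R i) / (⨅ i, R i) := div_pos (lt_of_lt_of_le hinfpos hiis) hinfpos
    show Real.log ((⨆ i, R i) / (⨅ i, R i)) ≤ 2 * Real.log (β / α)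
    calc Real.log ((⨆ i, R i) / (⨅ i, R i)) ≤ Real.log ((β/α)^2) :=
          Real.log_le_log hpos hratio
    _ = 2 * Real.log (β/α) := by rw [Real.log_pow]; push_cast; ring
  · -- part 4
    intro x y hx hy
    have hκeq : Real.tanh (2 * Real.log (β / α) / 4) = (β - α) / (β + α) := by
      have h24 : 2 * Real.log (β / α) / 4 = Real.log (β / α) / 2 := by ring
      rw [h24, tanh_half_log (div_pos hβ hα)]
      have h1 : β/α - 1 = (β - α)/α := by field_simp
      have h2 : β/α + 1 = (β + α)/α := by field_simp
      have hα0 : α ≠ 0 := hα.ne'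
      have hba : β + α ≠ 0 := by positivity
      rw [h1, h2]
      rw [div_div_div_cancel_right₀ hα0]
    set m := ⨅ j, x j / y j with hm'
    set M := ⨆ j, x j / y j with hM'
    have hcpos : ∀ j, 0 < x j / y j := fun j => div_pos (hx j) (hy j)
    have hm : 0 < m := fin_ciInf_pos' hcpos
    have hmM : m ≤ M := by
      rw [hm', hM']
      exact (fin_ciInf_le' (fun j => x j / y j) (Classical.arbitrary _)).trans
        (fin_le_ciSup' (fun j => x j / y j) (Classical.arbitrary _))
    have ht0 : (0:ℝ) < M / m := div_pos (lt_of_lt_of_le hm hmM) hm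
    set κ := (β - α)/(β + α) with hκ
    set T := (M/m)^κ with hT
    have hT0 : 0 < T := Real.rpow_pos_of_pos ht0 _
    have key : ∀ i k, Q.mulVec x i * Q.mulVec y k ≤ T * (Q.mulVec x k * Q.mulVec y i) := by
      intro i k
      have h := key_pair hn Q hα hαβ hQ hx hy i k
      simp only [← hm', ← hM', ← hκ, ← hT] at h
      exact h
    set R : Fin n → ℝ := fun i => Q.mulVec x i / Q.mulVec y i with hR
    have hRpos : ∀ i, 0 < R i := fun i => div_pos (hmv x hx i) (hmv y hy i)
    have hRik : ∀ i k, R i ≤ T * R k := by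
      intro i k
      rw [hR]
      rw [show T * (Q.mulVec x k / Q.mulVec y k) = (T * Q.mulVec x k) / Q.mulVec y k from
        (mul_div_assoc _ _ _).symm]
      rw [div_le_div_iff₀ (hmv y hy i) (hmv y hy k)]
      calc Q.mulVec x i * Q.mulVec y k ≤ T * (Q.mulVec x k * Q.mulVec y i) := key i k
      _ = T * Q.mulVec x k * Q.mulVec y i := by ring
    have hinfR : 0 < ⨅ i, R i := fin_ciInf_pos' hRpos
    have hsup_le : (⨆ i, R i) ≤ T * ⨅ i, R i := by
      refine ciSup_le fun i => ?_
      have h6 : R i / T ≤ ⨅ k, R k :=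
        le_ciInf fun k => (div_le_iff₀ hT0).2 (by rw [mul_comm]; exact hRik i k)
      calc R i = R i / T * T := by field_simp
      _ ≤ (⨅ k, R k) * T := mul_le_mul_of_nonneg_right h6 hT0.le
      _ = T * ⨅ k, R k := mul_comm _ _
    have hsupR : 0 < ⨆ i, R i := lt_of_lt_of_le hinfR
      ((fin_ciInf_le' R (Classical.arbitrary _)).trans (fin_le_ciSup' R (Classical.arbitrary _)))
    have hratio : (⨆ i, R i) / (⨅ i, R i) ≤ T := (div_le_iff₀ hinfR).2 hsup_le
    rw [hκeq]
    calc dHpos (Q.mulVec x) (Q.mulVec y)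
        = Real.log ((⨆ i, R i) / (⨅ i, R i)) := rfl
    _ ≤ Real.log T := Real.log_le_log (div_pos hsupR hinfR) hratio
    _ = κ * Real.log (M/m) := Real.log_rpow ht0 κ
    _ = κ * dHpos x y := rfl
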